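/- Let G : ℝᵖ → ℝᵖ be continuously differentiable on the closed ball B̄_r(θ*), and suppose for every θ ∈ B̄_r(θ*) the Jacobian DG(θ) is invertible and ‖DG(θ)⁻¹ G(θ*)‖₂ ≤ r. Then there exists u ∈ B̄_r(θ*) with G(u) = 0. -/

import Mathlib

open Metric Filter Set Topology

set_option maxHeartbeats 2000000

/-- Generic version of Neuberger's differentiable condition on a finite-dimensional
real normed space. -/
theorem neuberger_aux {E : Type*} [NormedAddCommGroup E] [NormedSpace ℝ E]
    [FiniteDimensional ℝ E] (r : ℝ) (hr : 0 < r) (θstar : E)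
    (G : E → E) (G' Ginv : E → (E →L[ℝ] E))
    (hderiv : ∀ θ ∈ Metric.closedBall θstar r, HasFDerivAt G (G' θ) θ)
    (hcont : ContinuousOn G' (Metric.closedBall θstar r))
    (hinv : ∀ θ ∈ Metric.closedBall θstar r,
      (G' θ).comp (Ginv θ) = ContinuousLinearMap.id ℝ E ∧
      (Ginv θ).comp (G' θ) = ContinuousLinearMap.id ℝ E)
    (hbound : ∀ θ ∈ Metric.closedBall θstar r, ‖Ginv θ (G θstar)‖ ≤ r) :
    ∃ u ∈ Metric.closedBall θstar r, G u = 0 := by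
  have hθK : θstar ∈ Metric.closedBall θstar r := Metric.mem_closedBall_self hr.le
  by_cases hv0 : G θstar = 0
  · exact ⟨θstar, hθK, hv0⟩
  set v : E := G θstar with hv
  -- key claim: for every δ ∈ (0,1) there is u in the ball with G u = δ • v
  have key : ∀ δ : ℝ, 0 < δ → δ < 1 → ∃ u ∈ Metric.closedBall θstar r, G u = δ • v := by
    intro δ hδ0 hδ1
    have h1δ : 0 < 1 - δ := by linarith
    set c : ℝ := r / (1 - δ) with hc
    have hc0 : 0 < c := div_pos hr h1δ
    have hcr : r < c := by
      rw [hc, lt_div_iff₀ h1δ]; nlinarith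
    have hcmul : c * (1 - δ) = r := by rw [hc, div_mul_cancel₀ r h1δ.ne']
    set A : Set ℝ := {t | t ∈ Set.Icc (0:ℝ) (1-δ) ∧ ∃ u : E, ‖u - θstar‖ ≤ c*t ∧ G u = (1-t) • v}
      with hA
    have hA0 : (0:ℝ) ∈ A := by
      refine ⟨⟨le_refl 0, h1δ.le⟩, θstar, by simp, by simp [hv]⟩
    have hAbdd : BddAbove A := ⟨1 - δ, fun t ht => ht.1.2⟩
    -- membership in the ball for witnesses
    have hwit : ∀ t ∈ A, ∀ u : E, ‖u - θstar‖ ≤ c*t → u ∈ Metric.closedBall θstar r := by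
      intro t ht u hu
      rw [Metric.mem_closedBall, dist_eq_norm]
      calc ‖u - θstar‖ ≤ c * t := hu
        _ ≤ c * (1 - δ) := by nlinarith [ht.1.2, hc0]
        _ = r := hcmul
    have hclosed : IsClosed A := by
      apply IsSeqClosed.isClosed
      intro ts t hts hlim
      choose u hu1 hu2 using fun n => (hts n).2
      have huK : ∀ n, u n ∈ Metric.closedBall θstar r :=
        fun n => hwit (ts n) (hts n) (u n) (hu1 n)
      obtain ⟨a, haK, φ, hφ, hlim2⟩ := (isCompact_closedBall θstar r).tendsto_subseq huK
      have hlimt : Tendsto (fun n => ts (φ n)) atTop (𝓝 t) := hlim.comp hφ.tendsto_atTop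
      refine ⟨isClosed_Icc.mem_of_tendsto hlim (Eventually.of_forall fun n => (hts n).1),
        a, ?_, ?_⟩
      · have h1 : Tendsto (fun n => ‖u (φ n) - θstar‖) atTop (𝓝 ‖a - θstar‖) :=
          ((hlim2.sub tendsto_const_nhds).norm)
        have h2 : Tendsto (fun n => c * ts (φ n)) atTop (𝓝 (c * t)) := hlimt.const_mul c
        exact le_of_tendsto_of_tendsto' h1 h2 (fun n => hu1 (φ n))
      · have hGa : ContinuousAt G a := (hderiv a haK).continuousAt
        have h1 : Tendsto (fun n => G (u (φ n))) atTop (𝓝 (G a)) := hGa.tendsto.comp hlim2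
        have h2 : Tendsto (fun n => G (u (φ n))) atTop (𝓝 ((1 - t) • v)) := by
          simp only [fun n => hu2 (φ n)]
          exact (tendsto_const_nhds.sub hlimt).smul tendsto_const_nhds
        exact tendsto_nhds_unique h1 h2
    set t₀ : ℝ := sSup A with ht₀
    have ht₀A : t₀ ∈ A := hclosed.csSup_mem ⟨0, hA0⟩ hAbdd
    obtain ⟨⟨ht₀0, ht₀le⟩, u₀, hu₀n, hu₀G⟩ := ht₀A
    have hu₀K : u₀ ∈ Metric.closedBall θstar r := hwit t₀ ⟨⟨ht₀0, ht₀le⟩, u₀, hu₀n, hu₀G⟩ u₀ hu₀n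
    -- we show t₀ = 1 - δ
    have htop : t₀ = 1 - δ := by
      by_contra hne
      have hlt : t₀ < 1 - δ := lt_of_le_of_ne ht₀le hne
      have hu₀r : ‖u₀ - θstar‖ < r := by
        calc ‖u₀ - θstar‖ ≤ c * t₀ := hu₀n
          _ < c * (1 - δ) := by exact mul_lt_mul_of_pos_left hlt hc0
          _ = r := hcmul
      have hball : Metric.ball θstar r ∈ 𝓝 u₀ :=
        Metric.isOpen_ball.mem_nhds (by rwa [Metric.mem_ball, dist_eq_norm])
      have hnhds : Metric.closedBall θstar r ∈ 𝓝 u₀ :=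
        Filter.mem_of_superset hball Metric.ball_subset_closedBall
      have hev : ∀ᶠ x in 𝓝 u₀, HasFDerivAt G (G' x) x := by
        filter_upwards [hball] with x hx using hderiv x (Metric.ball_subset_closedBall hx)
      have hcontat : ContinuousAt G' u₀ := hcont.continuousAt hnhds
      have hstrict0 : HasStrictFDerivAt G (G' u₀) u₀ :=
        hasStrictFDerivAt_of_hasFDerivAt_of_continuousAt hev hcontat
      obtain ⟨hc1, hc2⟩ := hinv u₀ hu₀K
      have h1' : ((G' u₀ : E →ₗ[ℝ] E)).comp (Ginv u₀ : E →ₗ[ℝ] E) = LinearMap.id := by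
        rw [← ContinuousLinearMap.toLinearMap_comp, hc1]; rfl
      have h2' : ((Ginv u₀ : E →ₗ[ℝ] E)).comp (G' u₀ : E →ₗ[ℝ] E) = LinearMap.id := by
        rw [← ContinuousLinearMap.toLinearMap_comp, hc2]; rfl
      set le : E ≃ₗ[ℝ] E := LinearEquiv.ofLinear (G' u₀ : E →ₗ[ℝ] E) (Ginv u₀ : E →ₗ[ℝ] E) h1' h2'
        with hle
      set e : E ≃L[ℝ] E := le.toContinuousLinearEquiv with he
      have hecoe : (e : E →L[ℝ] E) = G' u₀ := by
        apply ContinuousLinearMap.coe_injective; rfl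
      have hesymm : (e.symm : E →L[ℝ] E) = Ginv u₀ := by
        apply ContinuousLinearMap.coe_injective; rfl
      have hstrict : HasStrictFDerivAt G (e : E →L[ℝ] E) u₀ := hecoe ▸ hstrict0
      set g : E → E := hstrict.localInverse G e u₀ with hg
      have hginv : HasFDerivAt g (e.symm : E →L[ℝ] E) (G u₀) :=
        hstrict.to_localInverse.hasFDerivAt
      have hgval : g (G u₀) = u₀ := hstrict.localInverse_apply_image
      have hwb : ‖(e.symm : E →L[ℝ] E) v‖ ≤ r := by rw [hesymm]; exact hbound u₀ hu₀K
      set ε : ℝ := (c - r) / (2 * (‖v‖ + 1)) with hεdef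
      have hvpos : (0:ℝ) < ‖v‖ + 1 := by positivity
      have hε : 0 < ε := by
        apply div_pos (by linarith) (by positivity)
      have hεv : ε * ‖v‖ ≤ (c - r) / 2 := by
        rw [hεdef, div_mul_eq_mul_div, div_le_div_iff₀ (by positivity) (by norm_num)]
        nlinarith [norm_nonneg v]
      have hlo : ∀ᶠ y in 𝓝 (G u₀),
          ‖g y - g (G u₀) - (e.symm : E →L[ℝ] E) (y - G u₀)‖ ≤ ε * ‖y - G u₀‖ :=
        hginv.isLittleO.def hε
      have hri : ∀ᶠ y in 𝓝 (G u₀), G (g y) = y := hstrict.eventually_right_inverse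
      have hψ : Tendsto (fun h : ℝ => G u₀ - h • v) (𝓝 0) (𝓝 (G u₀)) := by
        have := (tendsto_const_nhds (x := G u₀) (f := 𝓝 (0:ℝ))).sub
          ((tendsto_id (x := 𝓝 (0:ℝ))).smul_const v)
        simpa using this
      have hev2 := hψ.eventually (hri.and hlo)
      obtain ⟨η, hη, hηP⟩ := Metric.eventually_nhds_iff.mp hev2
      set h : ℝ := min (η/2) (1 - δ - t₀) with hhdef
      have hh0 : 0 < h := lt_min (by linarith) (by linarith)
      have hhle : h ≤ 1 - δ - t₀ := min_le_right _ _
      obtain ⟨hP1, hP2⟩ := hηP (y := h) (by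
        rw [Real.dist_eq, sub_zero, abs_of_pos hh0]
        calc h ≤ η/2 := min_le_left _ _
          _ < η := by linarith)
      set u₁ : E := g (G u₀ - h • v) with hu₁
      have hdiff : G u₀ - h • v - G u₀ = -(h • v) := by abel
      have hnd : ‖G u₀ - h • v - G u₀‖ = h * ‖v‖ := by
        rw [hdiff, norm_neg, norm_smul, Real.norm_eq_abs, abs_of_pos hh0]
      have hlin : (e.symm : E →L[ℝ] E) (G u₀ - h • v - G u₀) = -(h • (e.symm : E →L[ℝ] E) v) := by
        rw [hdiff, map_neg, ContinuousLinearMap.map_smul]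
      have hP2' : ‖u₁ - u₀ + h • (e.symm : E →L[ℝ] E) v‖ ≤ ε * (h * ‖v‖) := by
        have := hP2
        rw [hgval, hlin, hnd, sub_neg_eq_add] at this
        exact this
      have hstep : ‖u₁ - u₀‖ ≤ h * c := by
        have htri : ‖u₁ - u₀‖ ≤ ‖u₁ - u₀ + h • (e.symm : E →L[ℝ] E) v‖
            + ‖h • (e.symm : E →L[ℝ] E) v‖ := by
          have := norm_add_le (u₁ - u₀ + h • (e.symm : E →L[ℝ] E) v)
            (-(h • (e.symm : E →L[ℝ] E) v))
          simpa using this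
        have hns : ‖h • (e.symm : E →L[ℝ] E) v‖ ≤ h * r := by
          rw [norm_smul, Real.norm_eq_abs, abs_of_pos hh0]
          exact mul_le_mul_of_nonneg_left hwb hh0.le
        have hεh : ε * (h * ‖v‖) ≤ h * ((c - r)/2) := by
          calc ε * (h * ‖v‖) = h * (ε * ‖v‖) := by ring
            _ ≤ h * ((c - r)/2) := by nlinarith
        calc ‖u₁ - u₀‖ ≤ ε * (h * ‖v‖) + h * r := by linarith [htri, hP2', hns]
          _ ≤ h * ((c - r)/2) + h * r := by linarith
          _ ≤ h * c := by nlinarith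
      have hmemA : t₀ + h ∈ A := by
        refine ⟨⟨by linarith, by linarith⟩, u₁, ?_, ?_⟩
        · calc ‖u₁ - θstar‖ = ‖(u₁ - u₀) + (u₀ - θstar)‖ := by abel_nf
            _ ≤ ‖u₁ - u₀‖ + ‖u₀ - θstar‖ := norm_add_le _ _
            _ ≤ h * c + c * t₀ := by linarith [hstep, hu₀n]
            _ = c * (t₀ + h) := by ring
        · rw [hP1, hu₀G, ← sub_smul]
          congr 1; ring
      have := le_csSup hAbdd hmemA
      linarith
    refine ⟨u₀, hu₀K, ?_⟩
    rw [hu₀G, htop]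
    congr 1; ring
  -- extract a zero via compactness
  have hKc : IsCompact (Metric.closedBall θstar r) := isCompact_closedBall _ _
  have hGc : ContinuousOn G (Metric.closedBall θstar r) :=
    fun x hx => (hderiv x hx).continuousAt.continuousWithinAt
  obtain ⟨u, huK, hmin⟩ := hKc.exists_isMinOn ⟨θstar, hθK⟩
    (continuous_norm.comp_continuousOn hGc)
  refine ⟨u, huK, ?_⟩
  have hvpos : 0 < ‖v‖ := norm_pos_iff.mpr hv0
  by_contra hGu
  have hGupos : 0 < ‖G u‖ := norm_pos_iff.mpr hGu
  have hle : ‖G u‖ ≤ ‖v‖ := hmin hθK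
  set δ : ℝ := ‖G u‖ / (2 * ‖v‖) with hδdef
  have hδ0 : 0 < δ := div_pos hGupos (by positivity)
  have hδ1 : δ < 1 := by
    rw [hδdef, div_lt_one (by positivity)]; linarith
  obtain ⟨u', hu'K, hGu'⟩ := key δ hδ0 hδ1
  have h1 : ‖G u‖ ≤ ‖G u'‖ := hmin hu'K
  have h2 : ‖G u'‖ = δ * ‖v‖ := by
    rw [hGu', norm_smul, Real.norm_eq_abs, abs_of_pos hδ0]
  have h3 : δ * ‖v‖ = ‖G u‖ / 2 := by
    rw [hδdef]; field_simp
  rw [h2, h3] at h1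
  linarith

/-- Differentiable version of Neuberger's condition: if `G` is `C¹` on the closed ball
`B̄_r(θ*)` with everywhere invertible Jacobian there, and `‖DG(θ)⁻¹ G(θ*)‖ ≤ r` on the
ball, then `G` has a zero in the ball. -/
theorem neuberger_zero_finding_differentiable {p : ℕ} (r : ℝ) (hr : 0 < r)
    (θstar : EuclideanSpace ℝ (Fin p))
    (G : EuclideanSpace ℝ (Fin p) → EuclideanSpace ℝ (Fin p))
    (G' Ginv : EuclideanSpace ℝ (Fin p) →
      (EuclideanSpace ℝ (Fin p) →L[ℝ] EuclideanSpace ℝ (Fin p)))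
    (hderiv : ∀ θ ∈ Metric.closedBall θstar r, HasFDerivAt G (G' θ) θ)
    (hcont : ContinuousOn G' (Metric.closedBall θstar r))
    (hinv : ∀ θ ∈ Metric.closedBall θstar r,
      (G' θ).comp (Ginv θ) = ContinuousLinearMap.id ℝ (EuclideanSpace ℝ (Fin p)) ∧
      (Ginv θ).comp (G' θ) = ContinuousLinearMap.id ℝ (EuclideanSpace ℝ (Fin p)))
    (hbound : ∀ θ ∈ Metric.closedBall θstar r, ‖Ginv θ (G θstar)‖ ≤ r) :
    ∃ u ∈ Metric.closedBall θstar r, G u = 0 :=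
  neuberger_aux r hr θstar G G' Ginv hderiv hcont hinv hbound
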